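/- Let V = A ∪ B ∪ {x} be a finite set, where A and B are disjoint and x ∉ A ∪ B. Define f : 2^V → ℝ by f(S) = |S| if x ∉ S and f(S) = |S ∩ A| if x ∈ S. Then f is non-negative and submodular. -/
import Mathlib


open Finset

/-- The function `f(S) = |S|` if `x ∉ S` and `f(S) = |S ∩ A|` if `x ∈ S`, on the ground set
`V = A ∪ B ∪ {x}` with `A`, `B`, `{x}` pairwise disjoint, is non-negative and submodular. -/
theorem nullifier_submodular {α : Type*} [DecidableEq α]
    (A B : Finset α) (x : α)
    (hAB : Disjoint A B) (hxA : x ∉ A) (hxB : x ∉ B)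
    (V : Finset α) (hV : V = A ∪ B ∪ {x})
    (f : Finset α → ℝ)
    (hf : ∀ S : Finset α, f S = if x ∈ S then ((S ∩ A).card : ℝ) else (S.card : ℝ)) :
    (∀ S ⊆ V, 0 ≤ f S) ∧
    (∀ X Y : Finset α, X ⊆ Y → Y ⊆ V → ∀ e ∈ V, e ∉ Y →
      f (insert e X) - f X ≥ f (insert e Y) - f Y) := by
  constructor
  · intro S _
    rw [hf]
    split <;> positivity
  · intro X Y hXY hYV e heV heY
    have heX : e ∉ X := fun h => heY (hXY h)
    rw [hf, hf, hf, hf]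
    by_cases hex : e = x
    · subst hex
      rw [if_pos (mem_insert_self _ X), if_pos (mem_insert_self _ Y),
        if_neg heX, if_neg heY, insert_inter_of_notMem hxA,
        insert_inter_of_notMem hxA]
      have h1 : (X \ A).card + (X ∩ A).card = X.card := card_sdiff_add_card_inter X A
      have h2 : (Y \ A).card + (Y ∩ A).card = Y.card := card_sdiff_add_card_inter Y A
      have h3 : (X \ A).card ≤ (Y \ A).card :=
        card_le_card (sdiff_subset_sdiff hXY (le_refl A))
      have h3' : ((X \ A).card : ℝ) ≤ ((Y \ A).card : ℝ) := by exact_mod_cast h3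
      push_cast [← h1, ← h2]
      linarith
    · have hxIX : (x ∈ insert e X) ↔ (x ∈ X) := by
        simp [mem_insert, Ne.symm hex]
      have hxIY : (x ∈ insert e Y) ↔ (x ∈ Y) := by
        simp [mem_insert, Ne.symm hex]
      simp only [hxIX, hxIY]
      by_cases hxY : x ∈ Y
      · rw [if_pos hxY]
        by_cases hxX : x ∈ X
        · rw [if_pos hxX, if_pos hxX, if_pos hxY]
          by_cases heA : e ∈ A
          · rw [insert_inter_of_mem heA, insert_inter_of_mem heA,
              card_insert_of_notMem (fun h => heX (mem_inter.1 h).1),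
              card_insert_of_notMem (fun h => heY (mem_inter.1 h).1)]
            push_cast; linarith
          · rw [insert_inter_of_notMem heA, insert_inter_of_notMem heA]
            linarith
        · rw [if_neg hxX, if_neg hxX, if_pos hxY,
            card_insert_of_notMem heX]
          have hle : (insert e Y ∩ A).card ≤ (insert e (Y ∩ A)).card := by
            apply card_le_card
            intro a ha
            rcases mem_inter.1 ha with ⟨h1, h2⟩
            rcases mem_insert.1 h1 with rfl | h1
            · exact mem_insert_self _ _
            · exact mem_insert_of_mem (mem_inter.2 ⟨h1, h2⟩)
          have h2 : (insert e (Y ∩ A)).card ≤ (Y ∩ A).card + 1 :=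
            card_insert_le _ _
          have h3 : ((insert e Y ∩ A).card : ℝ) ≤ ((Y ∩ A).card : ℝ) + 1 := by
            exact_mod_cast hle.trans h2
          push_cast
          linarith
      · have hxX : x ∉ X := fun h => hxY (hXY h)
        rw [if_neg hxX, if_neg hxX, if_neg hxY, if_neg hxY,
          card_insert_of_notMem heX, card_insert_of_notMem heY]
        push_cast; linarith
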